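/- Let Z = {P₁,…,P₉} ⊂ ℂ³ \ {0} be the B₃ configuration with representatives P₁=(1,0,0), P₂=(0,1,0), P₃=(0,0,1), P₄=(1,1,0), P₅=(1,−1,0), P₆=(1,0,1), P₇=(1,0,−1), P₈=(0,1,1), P₉=(0,1,−1). Then the ℂ-vector space of homogeneous polynomials of degree 4 in ℂ[x,y,z] vanishing at all nine points Pᵢ is exactly the 6-dimensional span of the six quartics x²yz, xy²z, xyz², xy(x²−y²), xz(x²−z²), yz(y²−z²). In particular the nine points impose independent conditions on quartics. -/

import Mathlib

open MvPolynomial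

/-- The nine points of the B₃ configuration in ℂ³. -/
noncomputable def B3points : Fin 9 → (Fin 3 → ℂ) :=
  ![![1, 0, 0], ![0, 1, 0], ![0, 0, 1],
    ![1, 1, 0], ![1, -1, 0], ![1, 0, 1],
    ![1, 0, -1], ![0, 1, 1], ![0, 1, -1]]

/-- The six quartics x²yz, xy²z, xyz², xy(x²−y²), xz(x²−z²), yz(y²−z²). -/
noncomputable def B3quartics : Fin 6 → MvPolynomial (Fin 3) ℂ :=
  ![X 0 ^ 2 * X 1 * X 2,
    X 0 * X 1 ^ 2 * X 2,
    X 0 * X 1 * X 2 ^ 2,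
    X 0 * X 1 * (X 0 ^ 2 - X 1 ^ 2),
    X 0 * X 2 * (X 0 ^ 2 - X 2 ^ 2),
    X 1 * X 2 * (X 1 ^ 2 - X 2 ^ 2)]

noncomputable def B3e (a b c : ℕ) : Fin 3 →₀ ℕ :=
  Finsupp.single 0 a + Finsupp.single 1 b + Finsupp.single 2 c

noncomputable def B3mono (a b c : ℕ) (k : ℂ) : MvPolynomial (Fin 3) ℂ :=
  monomial (B3e a b c) k

@[simp] lemma B3e0 (a b c : ℕ) : B3e a b c 0 = a := by simp [B3e, Finsupp.single_apply]
@[simp] lemma B3e1 (a b c : ℕ) : B3e a b c 1 = b := by simp [B3e, Finsupp.single_apply]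
@[simp] lemma B3e2 (a b c : ℕ) : B3e a b c 2 = c := by simp [B3e, Finsupp.single_apply]

lemma B3e_inj {a b c a' b' c' : ℕ} :
    B3e a b c = B3e a' b' c' ↔ a = a' ∧ b = b' ∧ c = c' := by
  constructor
  · intro h
    exact ⟨by rw [← B3e0 a b c, h, B3e0], by rw [← B3e1 a b c, h, B3e1],
      by rw [← B3e2 a b c, h, B3e2]⟩
  · rintro ⟨rfl, rfl, rfl⟩; rfl

lemma B3sum_e (m : Fin 3 →₀ ℕ) : m.degree = m 0 + m 1 + m 2 := by
  rw [Finsupp.degree_apply, Finset.sum_subset (Finset.subset_univ m.support)]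
  · exact Fin.sum_univ_three m
  · intro i _ hi; simpa using hi

lemma B3m_eq_e (m : Fin 3 →₀ ℕ) : m = B3e (m 0) (m 1) (m 2) := by
  ext i; fin_cases i <;> simp

lemma B3mono_eq (a b c : ℕ) (k : ℂ) :
    B3mono a b c k = C k * X 0 ^ a * X 1 ^ b * X 2 ^ c := by
  rw [B3mono, B3e, X_pow_eq_monomial, X_pow_eq_monomial, X_pow_eq_monomial,
    mul_assoc, mul_assoc, monomial_mul, monomial_mul, C_mul_monomial]
  ring_nf
  rw [add_assoc]

lemma B3eval_mono (a b c : ℕ) (k : ℂ) (v : Fin 3 → ℂ) :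
    eval v (B3mono a b c k) = k * v 0 ^ a * v 1 ^ b * v 2 ^ c := by
  rw [B3mono_eq]; simp

@[simp] lemma B3coeff_mono (a b c a' b' c' : ℕ) (k : ℂ) :
    coeff (B3e a' b' c') (B3mono a b c k) = if a = a' ∧ b = b' ∧ c = c' then k else 0 := by
  rw [B3mono, coeff_monomial]
  simp only [B3e_inj]

lemma B3mono_hom (a b c : ℕ) (k : ℂ) : (B3mono a b c k).IsHomogeneous (a + b + c) :=
  isHomogeneous_monomial _ (by rw [B3sum_e]; simp)

lemma B3q0 : B3quartics 0 = B3mono 2 1 1 1 := by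
  show X 0 ^ 2 * X 1 * X 2 = _; rw [B3mono_eq]; simp
lemma B3q1 : B3quartics 1 = B3mono 1 2 1 1 := by
  show X 0 * X 1 ^ 2 * X 2 = _; rw [B3mono_eq]; simp
lemma B3q2 : B3quartics 2 = B3mono 1 1 2 1 := by
  show X 0 * X 1 * X 2 ^ 2 = _; rw [B3mono_eq]; simp
lemma B3q3 : B3quartics 3 = B3mono 3 1 0 1 - B3mono 1 3 0 1 := by
  show X 0 * X 1 * (X 0 ^ 2 - X 1 ^ 2) = _; rw [B3mono_eq, B3mono_eq]; simp; ring
lemma B3q4 : B3quartics 4 = B3mono 3 0 1 1 - B3mono 1 0 3 1 := by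
  show X 0 * X 2 * (X 0 ^ 2 - X 2 ^ 2) = _; rw [B3mono_eq, B3mono_eq]; simp; ring
lemma B3q5 : B3quartics 5 = B3mono 0 3 1 1 - B3mono 0 1 3 1 := by
  show X 1 * X 2 * (X 1 ^ 2 - X 2 ^ 2) = _; rw [B3mono_eq, B3mono_eq]; simp; ring

lemma B3q_hom (i : Fin 6) : (B3quartics i).IsHomogeneous 4 := by
  have h0 : (B3quartics 0).IsHomogeneous 4 := by rw [B3q0]; simpa using B3mono_hom 2 1 1 1
  have h1 : (B3quartics 1).IsHomogeneous 4 := by rw [B3q1]; simpa using B3mono_hom 1 2 1 1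
  have h2 : (B3quartics 2).IsHomogeneous 4 := by rw [B3q2]; simpa using B3mono_hom 1 1 2 1
  have h3 : (B3quartics 3).IsHomogeneous 4 := by
    rw [B3q3, show (4:ℕ) = 3+1+0 from rfl]
    exact (B3mono_hom 3 1 0 1).sub (by simpa using B3mono_hom 1 3 0 1)
  have h4 : (B3quartics 4).IsHomogeneous 4 := by
    rw [B3q4, show (4:ℕ) = 3+0+1 from rfl]
    exact (B3mono_hom 3 0 1 1).sub (by simpa using B3mono_hom 1 0 3 1)
  have h5 : (B3quartics 5).IsHomogeneous 4 := by
    rw [B3q5, show (4:ℕ) = 0+3+1 from rfl]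
    exact (B3mono_hom 0 3 1 1).sub (by simpa using B3mono_hom 0 1 3 1)
  fin_cases i
  exacts [h0, h1, h2, h3, h4, h5]

@[simp] lemma B3P0 : B3points 0 = ![1, 0, 0] := rfl
@[simp] lemma B3P1 : B3points 1 = ![0, 1, 0] := rfl
@[simp] lemma B3P2 : B3points 2 = ![0, 0, 1] := rfl
@[simp] lemma B3P3 : B3points 3 = ![1, 1, 0] := rfl
@[simp] lemma B3P4 : B3points 4 = ![1, -1, 0] := rfl
@[simp] lemma B3P5 : B3points 5 = ![1, 0, 1] := rfl
@[simp] lemma B3P6 : B3points 6 = ![1, 0, -1] := rfl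
@[simp] lemma B3P7 : B3points 7 = ![0, 1, 1] := rfl
@[simp] lemma B3P8 : B3points 8 = ![0, 1, -1] := rfl

lemma B3q_vanish (i : Fin 9) (j : Fin 6) : eval (B3points i) (B3quartics j) = 0 := by
  have h0 : eval (B3points i) (B3quartics 0) = 0 := by
    rw [B3q0, B3eval_mono]; fin_cases i <;> simp
  have h1 : eval (B3points i) (B3quartics 1) = 0 := by
    rw [B3q1, B3eval_mono]; fin_cases i <;> simp
  have h2 : eval (B3points i) (B3quartics 2) = 0 := by
    rw [B3q2, B3eval_mono]; fin_cases i <;> simp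
  have h3 : eval (B3points i) (B3quartics 3) = 0 := by
    rw [B3q3, map_sub, B3eval_mono, B3eval_mono]; fin_cases i <;> simp <;> norm_num
  have h4 : eval (B3points i) (B3quartics 4) = 0 := by
    rw [B3q4, map_sub, B3eval_mono, B3eval_mono]; fin_cases i <;> simp <;> norm_num
  have h5 : eval (B3points i) (B3quartics 5) = 0 := by
    rw [B3q5, map_sub, B3eval_mono, B3eval_mono]; fin_cases i <;> simp <;> norm_num
  fin_cases j
  exacts [h0, h1, h2, h3, h4, h5]

lemma B3decomp (F : MvPolynomial (Fin 3) ℂ) (hF : F.IsHomogeneous 4) :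
    F = B3mono 4 0 0 (coeff (B3e 4 0 0) F) + B3mono 3 1 0 (coeff (B3e 3 1 0) F)
      + B3mono 3 0 1 (coeff (B3e 3 0 1) F) + B3mono 2 2 0 (coeff (B3e 2 2 0) F)
      + B3mono 2 1 1 (coeff (B3e 2 1 1) F) + B3mono 2 0 2 (coeff (B3e 2 0 2) F)
      + B3mono 1 3 0 (coeff (B3e 1 3 0) F) + B3mono 1 2 1 (coeff (B3e 1 2 1) F)
      + B3mono 1 1 2 (coeff (B3e 1 1 2) F) + B3mono 1 0 3 (coeff (B3e 1 0 3) F)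
      + B3mono 0 4 0 (coeff (B3e 0 4 0) F) + B3mono 0 3 1 (coeff (B3e 0 3 1) F)
      + B3mono 0 2 2 (coeff (B3e 0 2 2) F) + B3mono 0 1 3 (coeff (B3e 0 1 3) F)
      + B3mono 0 0 4 (coeff (B3e 0 0 4) F) := by
  apply MvPolynomial.ext
  intro m
  simp only [coeff_add]
  by_cases h4 : m 0 + m 1 + m 2 = 4
  · rw [B3m_eq_e m]
    set a := m 0; set b := m 1; set c := m 2
    have ha : a ≤ 4 := by omega
    have hb : b ≤ 4 := by omega
    have hc : c ≤ 4 := by omega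
    simp only [B3mono, coeff_monomial, B3e_inj]
    interval_cases a <;> interval_cases b <;> interval_cases c <;> first | omega | simp
  · have hz : ∀ a b c : ℕ, ∀ k : ℂ, a + b + c = 4 → coeff m (B3mono a b c k) = 0 := by
      intro a b c k habc
      rw [B3mono, coeff_monomial, if_neg]
      intro he
      apply h4
      rw [← he]; simp [habc]
    have hF0 : coeff m F = 0 := hF.coeff_eq_zero (by rw [B3sum_e]; exact h4)
    rw [hF0, hz 4 0 0 _ (by norm_num), hz 3 1 0 _ (by norm_num), hz 3 0 1 _ (by norm_num),
      hz 2 2 0 _ (by norm_num), hz 2 1 1 _ (by norm_num), hz 2 0 2 _ (by norm_num),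
      hz 1 3 0 _ (by norm_num), hz 1 2 1 _ (by norm_num), hz 1 1 2 _ (by norm_num),
      hz 1 0 3 _ (by norm_num), hz 0 4 0 _ (by norm_num), hz 0 3 1 _ (by norm_num),
      hz 0 2 2 _ (by norm_num), hz 0 1 3 _ (by norm_num), hz 0 0 4 _ (by norm_num)]
    norm_num

theorem b3_quartics_through_Z :
    LinearIndependent ℂ B3quartics ∧
    {F : MvPolynomial (Fin 3) ℂ |
        F.IsHomogeneous 4 ∧ ∀ i : Fin 9, eval (B3points i) F = 0}
      = (↑(Submodule.span ℂ (Set.range B3quartics)) :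
          Set (MvPolynomial (Fin 3) ℂ)) := by
  constructor
  · rw [Fintype.linearIndependent_iff]
    intro g hg
    have hq : ∑ i, g i • B3quartics i
        = B3mono 2 1 1 (g 0) + B3mono 1 2 1 (g 1) + B3mono 1 1 2 (g 2)
          + (B3mono 3 1 0 (g 3) - B3mono 1 3 0 (g 3))
          + (B3mono 3 0 1 (g 4) - B3mono 1 0 3 (g 4))
          + (B3mono 0 3 1 (g 5) - B3mono 0 1 3 (g 5)) := by
      rw [Fin.sum_univ_six, B3q0, B3q1, B3q2, B3q3, B3q4, B3q5]
      simp only [smul_eq_C_mul, B3mono_eq, map_one, one_mul]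
      ring
    rw [hq] at hg
    intro i
    fin_cases i
    · simpa using congrArg (coeff (B3e 2 1 1)) hg
    · simpa using congrArg (coeff (B3e 1 2 1)) hg
    · simpa using congrArg (coeff (B3e 1 1 2)) hg
    · simpa using congrArg (coeff (B3e 3 1 0)) hg
    · simpa using congrArg (coeff (B3e 3 0 1)) hg
    · simpa using congrArg (coeff (B3e 0 3 1)) hg
  · ext F
    simp only [Set.mem_setOf_eq, SetLike.mem_coe]
    constructor
    · rintro ⟨hF, hev⟩
      have hdec := B3decomp F hF
      have E0 := hev 0; have E1 := hev 1; have E2 := hev 2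
      have E3 := hev 3; have E4 := hev 4; have E5 := hev 5
      have E6 := hev 6; have E7 := hev 7; have E8 := hev 8
      rw [hdec] at E0 E1 E2 E3 E4 E5 E6 E7 E8
      simp only [map_add, B3eval_mono, B3P0, B3P1, B3P2, B3P3, B3P4, B3P5, B3P6, B3P7, B3P8,
        Matrix.cons_val_zero, Matrix.cons_val_one, Matrix.head_cons, Matrix.cons_val_two,
        Matrix.tail_cons] at E0 E1 E2 E3 E4 E5 E6 E7 E8
      norm_num at E0 E1 E2 E3 E4 E5 E6 E7 E8
      -- scalar consequences
      have h400 : coeff (B3e 4 0 0) F = 0 := by linear_combination E0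
      have h040 : coeff (B3e 0 4 0) F = 0 := by linear_combination E1
      have h004 : coeff (B3e 0 0 4) F = 0 := by linear_combination E2
      have h220 : coeff (B3e 2 2 0) F = 0 := by linear_combination E3/2 + E4/2 - E0 - E1
      have h130 : coeff (B3e 1 3 0) F = -coeff (B3e 3 1 0) F := by
        linear_combination E3/2 - E4/2
      have h202 : coeff (B3e 2 0 2) F = 0 := by linear_combination E5/2 + E6/2 - E0 - E2
      have h103 : coeff (B3e 1 0 3) F = -coeff (B3e 3 0 1) F := by
        linear_combination E5/2 - E6/2
      have h022 : coeff (B3e 0 2 2) F = 0 := by linear_combination E7/2 + E8/2 - E1 - E2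
      have h013 : coeff (B3e 0 1 3) F = -coeff (B3e 0 3 1) F := by
        linear_combination E7/2 - E8/2
      have key : F
          = C (coeff (B3e 2 1 1) F) * B3quartics 0 + C (coeff (B3e 1 2 1) F) * B3quartics 1
            + C (coeff (B3e 1 1 2) F) * B3quartics 2 + C (coeff (B3e 3 1 0) F) * B3quartics 3
            + C (coeff (B3e 3 0 1) F) * B3quartics 4 + C (coeff (B3e 0 3 1) F) * B3quartics 5 := by
        conv_lhs => rw [hdec]
        rw [B3q0, B3q1, B3q2, B3q3, B3q4, B3q5,
          h400, h040, h004, h220, h202, h022, h130, h103, h013]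
        simp only [B3mono_eq, map_zero, map_neg, map_one]
        ring
      rw [key]
      have hmem : ∀ (i : Fin 6) (a : ℂ),
          C a * B3quartics i ∈ Submodule.span ℂ (Set.range B3quartics) := by
        intro i a
        rw [← smul_eq_C_mul]
        exact Submodule.smul_mem _ _ (Submodule.subset_span ⟨i, rfl⟩)
      exact add_mem (add_mem (add_mem (add_mem (add_mem (hmem 0 _) (hmem 1 _)) (hmem 2 _))
        (hmem 3 _)) (hmem 4 _)) (hmem 5 _)
    · intro hF
      have hsub : Submodule.span ℂ (Set.range B3quartics) ≤
          (homogeneousSubmodule (Fin 3) ℂ 4) ⊓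
            (⨅ i : Fin 9, LinearMap.ker ((aeval (B3points i) :
              MvPolynomial (Fin 3) ℂ →ₐ[ℂ] ℂ).toLinearMap)) := by
        rw [Submodule.span_le]
        rintro _ ⟨j, rfl⟩
        refine Submodule.mem_inf.2 ⟨(mem_homogeneousSubmodule _ _).2 (B3q_hom j), ?_⟩
        rw [Submodule.mem_iInf]
        intro i
        rw [LinearMap.mem_ker]
        show aeval (B3points i) (B3quartics j) = 0
        rw [show (aeval (B3points i) : MvPolynomial (Fin 3) ℂ →ₐ[ℂ] ℂ) (B3quartics j)
            = eval (B3points i) (B3quartics j) from by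
          rw [← coe_aeval_eq_eval]; rfl]
        exact B3q_vanish i j
      have h := hsub hF
      rw [Submodule.mem_inf, Submodule.mem_iInf] at h
      refine ⟨(mem_homogeneousSubmodule _ _).1 h.1, fun i => ?_⟩
      have hk := h.2 i
      rw [LinearMap.mem_ker] at hk
      rw [show eval (B3points i) F = (aeval (B3points i) :
          MvPolynomial (Fin 3) ℂ →ₐ[ℂ] ℂ) F from by rw [← coe_aeval_eq_eval]; rfl]
      exact hk
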